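/- There is no λ ∈ ℂ and nonzero φ ∈ H^3(−∞,0) satisfying λφ + φ' + φ''' = 0 on (−∞,0) with φ(0) = φ'(0) = 0. -/

import Mathlib

open MeasureTheory Set Filter Complex Topology

private lemma int_mul_conj {f g : ℝ → ℂ}
    (hf : MemLp f 2 (volume.restrict (Iio (0:ℝ))))
    (hg : MemLp g 2 (volume.restrict (Iio (0:ℝ)))) :
    IntegrableOn (fun x => f x * starRingEnd ℂ (g x)) (Iio (0:ℝ)) := by
  have hgc : MemLp (fun x => starRingEnd ℂ (g x)) 2 (volume.restrict (Iio (0:ℝ))) := by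
    refine hg.of_le (continuous_star.comp_aestronglyMeasurable hg.1) ?_
    filter_upwards with x
    simp
  have := memLp_one_iff_integrable.mp (hgc.smul (φ := f) hf (r := 1))
  exact this.congr (by filter_upwards with x; simp [smul_eq_mul])

private lemma ftc_conj {f g f' g' : ℝ → ℂ}
    (hf : ∀ x, HasDerivAt f (f' x) x) (hg : ∀ x, HasDerivAt g (g' x) x)
    (h1 : IntegrableOn (fun x => f x * starRingEnd ℂ (g x)) (Iio (0:ℝ)))
    (h2 : IntegrableOn (fun x => f' x * starRingEnd ℂ (g x) + f x * starRingEnd ℂ (g' x)) (Iio (0:ℝ))) :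
    ∫ x in Iio (0:ℝ), (f' x * starRingEnd ℂ (g x) + f x * starRingEnd ℂ (g' x)) = f 0 * starRingEnd ℂ (g 0) := by
  set G : ℝ → ℂ := fun x => f x * starRingEnd ℂ (g x) with hG
  have hd : ∀ x, HasDerivAt G (f' x * starRingEnd ℂ (g x) + f x * starRingEnd ℂ (g' x)) x := by
    intro x
    have := (hf x).mul ((hg x).star)
    exact this
  have h1' : IntegrableOn G (Iic (0:ℝ)) := h1.congr_set_ae Iio_ae_eq_Iic.symm
  have h2' : IntegrableOn (fun x => f' x * starRingEnd ℂ (g x) + f x * starRingEnd ℂ (g' x)) (Iic (0:ℝ)) :=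
    h2.congr_set_ae Iio_ae_eq_Iic.symm
  have htend : Tendsto G atBot (𝓝 0) :=
    tendsto_zero_of_hasDerivAt_of_integrableOn_Iic (fun x _ => hd x) h2' h1'
  have := integral_Iic_of_hasDerivAt_of_tendsto' (fun x _ => hd x) h2' htend
  rw [setIntegral_congr_set Iio_ae_eq_Iic, this, sub_zero]

private lemma conj_swap (f g : ℝ → ℂ) :
    (∫ x in Iio (0:ℝ), f x * starRingEnd ℂ (g x)) =
      starRingEnd ℂ (∫ x in Iio (0:ℝ), g x * starRingEnd ℂ (f x)) := by
  rw [← integral_conj]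
  congr 1
  funext x
  simp [map_mul, mul_comm]

private lemma int_self_real {f : ℝ → ℂ} :
    (∫ x in Iio (0:ℝ), f x * starRingEnd ℂ (f x)) =
      ((∫ x in Iio (0:ℝ), Complex.normSq (f x) : ℝ) : ℂ) :=
  calc ∫ x in Iio (0:ℝ), f x * starRingEnd ℂ (f x)
      = ∫ x in Iio (0:ℝ), ((Complex.normSq (f x) : ℝ) : ℂ) := by
        congr 1; funext x; exact Complex.mul_conj (f x)
    _ = _ := integral_ofReal

theorem stmt_3 :
    ¬ ∃ (lam : ℂ) (φ : ℝ → ℂ),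
        ContDiff ℝ 3 φ ∧
        MemLp φ 2 (volume.restrict (Iio (0:ℝ))) ∧
        MemLp (deriv φ) 2 (volume.restrict (Iio (0:ℝ))) ∧
        MemLp (iteratedDeriv 2 φ) 2 (volume.restrict (Iio (0:ℝ))) ∧
        MemLp (iteratedDeriv 3 φ) 2 (volume.restrict (Iio (0:ℝ))) ∧
        (∀ x < (0:ℝ), lam * φ x + deriv φ x + iteratedDeriv 3 φ x = 0) ∧
        φ 0 = 0 ∧ deriv φ 0 = 0 ∧
        (∃ x ≤ (0:ℝ), φ x ≠ 0) := by
  rintro ⟨lam, φ, hC, hL0, hL1, hL2, hL3, heq, hφ0, hφ'0, x₀, hx₀le, hx₀ne⟩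
  have hx₀ : x₀ < 0 := lt_of_le_of_ne hx₀le (by rintro rfl; exact hx₀ne hφ0)
  set ψ1 : ℝ → ℂ := deriv φ with hψ1def
  set ψ2 : ℝ → ℂ := iteratedDeriv 2 φ with hψ2def
  set ψ3 : ℝ → ℂ := iteratedDeriv 3 φ with hψ3def
  -- derivative facts
  have e2 : deriv ψ1 = ψ2 := by
    have h := iteratedDeriv_succ (n := 1) (f := φ)
    rw [iteratedDeriv_one] at h
    exact h.symm
  have e3 : deriv ψ2 = ψ3 := (iteratedDeriv_succ (n := 2) (f := φ)).symm
  have hd0 : ∀ x, HasDerivAt φ (ψ1 x) x := fun x =>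
    ((hC.differentiable (by norm_num)) x).hasDerivAt
  have hd1 : ∀ x, HasDerivAt ψ1 (ψ2 x) x := by
    intro x
    have hdiff := (hC.differentiable_iteratedDeriv 1 (by norm_num)) x
    rw [iteratedDeriv_one] at hdiff
    have := hdiff.hasDerivAt
    rwa [e2] at this
  have hd2 : ∀ x, HasDerivAt ψ2 (ψ3 x) x := by
    intro x
    have hdiff := (hC.differentiable_iteratedDeriv 2 (by norm_num)) x
    have := hdiff.hasDerivAt
    rwa [show deriv (iteratedDeriv 2 φ) = ψ3 from e3] at this
  have hc0 : Continuous φ := hC.continuous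
  have hc1 : Continuous ψ1 := by
    have := hC.continuous_iteratedDeriv 1 (by norm_num)
    rwa [iteratedDeriv_one] at this
  have hc2 : Continuous ψ2 := hC.continuous_iteratedDeriv 2 (by norm_num)
  have hc3 : Continuous ψ3 := hC.continuous_iteratedDeriv 3 (by norm_num)
  -- FTC identities
  have A00 := ftc_conj hd0 hd0 (int_mul_conj hL0 hL0)
    ((int_mul_conj hL1 hL0).add (int_mul_conj hL0 hL1))
  have A01 := ftc_conj hd0 hd1 (int_mul_conj hL0 hL1)
    ((int_mul_conj hL1 hL1).add (int_mul_conj hL0 hL2))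
  have A11 := ftc_conj hd1 hd1 (int_mul_conj hL1 hL1)
    ((int_mul_conj hL2 hL1).add (int_mul_conj hL1 hL2))
  have A20 := ftc_conj hd2 hd0 (int_mul_conj hL2 hL0)
    ((int_mul_conj hL3 hL0).add (int_mul_conj hL2 hL1))
  have A22 := ftc_conj hd2 hd2 (int_mul_conj hL2 hL2)
    ((int_mul_conj hL3 hL2).add (int_mul_conj hL2 hL3))
  rw [integral_add (int_mul_conj hL1 hL0) (int_mul_conj hL0 hL1)] at A00
  rw [integral_add (int_mul_conj hL1 hL1) (int_mul_conj hL0 hL2)] at A01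
  rw [integral_add (int_mul_conj hL2 hL1) (int_mul_conj hL1 hL2)] at A11
  rw [integral_add (int_mul_conj hL3 hL0) (int_mul_conj hL2 hL1)] at A20
  rw [integral_add (int_mul_conj hL3 hL2) (int_mul_conj hL2 hL3)] at A22
  simp only [hφ0, hφ'0, map_zero, mul_zero, zero_mul] at A00 A01 A11 A20
  -- the equation, integrated against conj ψ for ψ = φ and ψ = ψ2
  have hzero : ∀ ψ : ℝ → ℂ,
      ∫ x in Iio (0:ℝ), ((lam * φ x + ψ1 x + ψ3 x) * starRingEnd ℂ (ψ x)) = 0 := by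
    intro ψ
    rw [setIntegral_congr_fun measurableSet_Iio (g := fun _ => (0:ℂ))
      (fun x hx => by rw [heq x hx, zero_mul])]
    simp
  have E0 : lam * (∫ x in Iio (0:ℝ), φ x * starRingEnd ℂ (φ x)) +
      ((∫ x in Iio (0:ℝ), ψ1 x * starRingEnd ℂ (φ x)) +
       (∫ x in Iio (0:ℝ), ψ3 x * starRingEnd ℂ (φ x))) = 0 := by
    have h := hzero φ
    rw [show (fun x => (lam * φ x + ψ1 x + ψ3 x) * starRingEnd ℂ (φ x)) =
        fun x => lam * (φ x * starRingEnd ℂ (φ x)) +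
          (ψ1 x * starRingEnd ℂ (φ x) + ψ3 x * starRingEnd ℂ (φ x))
      from funext fun x => by ring] at h
    have hadd : Integrable (fun x => ψ1 x * starRingEnd ℂ (φ x) + ψ3 x * starRingEnd ℂ (φ x))
        (volume.restrict (Iio (0:ℝ))) := (int_mul_conj hL1 hL0).add (int_mul_conj hL3 hL0)
    rwa [integral_add ((int_mul_conj hL0 hL0).const_mul lam) hadd,
      integral_add (int_mul_conj hL1 hL0) (int_mul_conj hL3 hL0),
      integral_const_mul] at h
  have E2 : lam * (∫ x in Iio (0:ℝ), φ x * starRingEnd ℂ (ψ2 x)) +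
      ((∫ x in Iio (0:ℝ), ψ1 x * starRingEnd ℂ (ψ2 x)) +
       (∫ x in Iio (0:ℝ), ψ3 x * starRingEnd ℂ (ψ2 x))) = 0 := by
    have h := hzero ψ2
    rw [show (fun x => (lam * φ x + ψ1 x + ψ3 x) * starRingEnd ℂ (ψ2 x)) =
        fun x => lam * (φ x * starRingEnd ℂ (ψ2 x)) +
          (ψ1 x * starRingEnd ℂ (ψ2 x) + ψ3 x * starRingEnd ℂ (ψ2 x))
      from funext fun x => by ring] at h
    have hadd : Integrable (fun x => ψ1 x * starRingEnd ℂ (ψ2 x) + ψ3 x * starRingEnd ℂ (ψ2 x))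
        (volume.restrict (Iio (0:ℝ))) := (int_mul_conj hL1 hL2).add (int_mul_conj hL3 hL2)
    rwa [integral_add ((int_mul_conj hL0 hL2).const_mul lam) hadd,
      integral_add (int_mul_conj hL1 hL2) (int_mul_conj hL3 hL2),
      integral_const_mul] at h
  -- real parts
  have reI10 : (∫ x in Iio (0:ℝ), ψ1 x * starRingEnd ℂ (φ x)).re = 0 := by
    have h := A00
    rw [conj_swap φ ψ1] at h
    have h2 := congrArg Complex.re h
    simp [Complex.add_re, Complex.conj_re] at h2
    linarith
  have reI21 : (∫ x in Iio (0:ℝ), ψ2 x * starRingEnd ℂ (ψ1 x)).re = 0 := by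
    have h := A11
    rw [conj_swap ψ1 ψ2] at h
    have h2 := congrArg Complex.re h
    simp [Complex.add_re, Complex.conj_re] at h2
    linarith
  have reI30 : (∫ x in Iio (0:ℝ), ψ3 x * starRingEnd ℂ (φ x)).re = 0 := by
    have h2 := congrArg Complex.re A20
    simp [Complex.add_re] at h2
    linarith [reI21]
  have hr0pos : 0 < ∫ x in Iio (0:ℝ), Complex.normSq (φ x) := by
    have hnn : 0 ≤ᵐ[volume.restrict (Iio (0:ℝ))] fun x => Complex.normSq (φ x) :=
      Eventually.of_forall fun x => Complex.normSq_nonneg _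
    have hint : IntegrableOn (fun x => Complex.normSq (φ x)) (Iio (0:ℝ)) := by
      have := (int_mul_conj hL0 hL0).re
      exact this.congr (by filter_upwards with x; simp [Complex.mul_conj])
    rw [setIntegral_pos_iff_support_of_nonneg_ae hnn hint]
    have hV : IsOpen ({x : ℝ | φ x ≠ 0} ∩ Iio 0) :=
      ((isOpen_compl_singleton.preimage hc0).inter isOpen_Iio)
    refine lt_of_lt_of_le (hV.measure_pos volume ⟨x₀, hx₀ne, hx₀⟩) (measure_mono ?_)
    rintro x ⟨hx1, hx2⟩
    exact ⟨by simp [Function.mem_support, Complex.normSq_eq_zero]; exact hx1, hx2⟩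
  have hlamre : lam.re = 0 := by
    have h2 := congrArg Complex.re E0
    rw [int_self_real] at h2
    simp [Complex.add_re, Complex.mul_re, reI10, reI30] at h2
    rcases h2 with h2 | h2
    · exact h2
    · exact absurd h2 (ne_of_gt hr0pos)
  -- φ''(0) = 0
  have hψ20 : ψ2 0 = 0 := by
    have hI02 : (∫ x in Iio (0:ℝ), φ x * starRingEnd ℂ (ψ2 x)) =
        -((∫ x in Iio (0:ℝ), Complex.normSq (ψ1 x) : ℝ) : ℂ) := by
      rw [← int_self_real (f := ψ1)]
      linear_combination A01
    have reI12 : (∫ x in Iio (0:ℝ), ψ1 x * starRingEnd ℂ (ψ2 x)).re = 0 := by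
      rw [conj_swap ψ1 ψ2]
      simp [Complex.conj_re, reI21]
    have reI32 : (∫ x in Iio (0:ℝ), ψ3 x * starRingEnd ℂ (ψ2 x)).re = 0 := by
      have h2 := congrArg Complex.re E2
      rw [hI02] at h2
      simp [Complex.add_re, Complex.mul_re, hlamre, reI12] at h2
      linarith
    have h := A22
    rw [conj_swap ψ2 ψ3] at h
    have h2 := congrArg Complex.re h
    rw [Complex.mul_conj] at h2
    simp [Complex.add_re, Complex.conj_re, reI32] at h2
    exact Complex.normSq_eq_zero.mp h2.symm
  -- the ODE satisfied up to the boundary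
  have heq' : ∀ x ≤ (0:ℝ), lam * φ x + ψ1 x + ψ3 x = 0 := by
    intro x hx
    rcases lt_or_eq_of_le hx with hlt | rfl
    · exact heq x hlt
    · have hcont : Continuous fun y => lam * φ y + ψ1 y + ψ3 y :=
        ((continuous_const.mul hc0).add hc1).add hc3
      have ht1 : Tendsto (fun y => lam * φ y + ψ1 y + ψ3 y) (nhdsWithin 0 (Iio 0))
          (nhds (lam * φ 0 + ψ1 0 + ψ3 0)) :=
        (hcont.tendsto 0).mono_left nhdsWithin_le_nhds
      have ht2 : Tendsto (fun y => lam * φ y + ψ1 y + ψ3 y) (nhdsWithin 0 (Iio 0))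
          (nhds 0) := by
        apply Tendsto.congr' _ tendsto_const_nhds
        filter_upwards [self_mem_nhdsWithin] with y hy
        exact (heq y hy).symm
      exact tendsto_nhds_unique ht1 ht2
  -- uniqueness for the time-reversed ODE
  set v : ℝ → ℂ × ℂ × ℂ → ℂ × ℂ × ℂ :=
    fun _ p => (-p.2.1, -p.2.2, lam * p.1 + p.2.1) with hvdef
  have hlip : ∀ t, LipschitzWith (1 + ‖lam‖₊) (v t) := by
    intro t
    apply LipschitzWith.of_dist_le_mul
    intro p q
    have h1 : dist p.1 q.1 ≤ dist p q := by
      rw [Prod.dist_eq]; exact le_max_left _ _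
    have h2 : dist p.2.1 q.2.1 ≤ dist p q := by
      rw [Prod.dist_eq (x := p), Prod.dist_eq (x := p.2)]
      exact le_max_of_le_right (le_max_left _ _)
    have h3 : dist p.2.2 q.2.2 ≤ dist p q := by
      rw [Prod.dist_eq (x := p), Prod.dist_eq (x := p.2)]
      exact le_max_of_le_right (le_max_right _ _)
    have hK : ((1 + ‖lam‖₊ : NNReal) : ℝ) = 1 + ‖lam‖ := by push_cast; ring
    have hd : (0:ℝ) ≤ dist p q := dist_nonneg
    have hl : (0:ℝ) ≤ ‖lam‖ := norm_nonneg _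
    have h4 : dist (lam * p.1 + p.2.1) (lam * q.1 + q.2.1) ≤
        ‖lam‖ * dist p.1 q.1 + dist p.2.1 q.2.1 := by
      rw [dist_eq_norm, dist_eq_norm, dist_eq_norm]
      calc ‖lam * p.1 + p.2.1 - (lam * q.1 + q.2.1)‖
          = ‖lam * (p.1 - q.1) + (p.2.1 - q.2.1)‖ := by ring_nf
        _ ≤ ‖lam * (p.1 - q.1)‖ + ‖p.2.1 - q.2.1‖ := norm_add_le _ _
        _ = ‖lam‖ * ‖p.1 - q.1‖ + ‖p.2.1 - q.2.1‖ := by rw [norm_mul]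
    rw [hK]
    show dist ((-p.2.1, -p.2.2, lam * p.1 + p.2.1) : ℂ × ℂ × ℂ)
        (-q.2.1, -q.2.2, lam * q.1 + q.2.1) ≤ (1 + ‖lam‖) * dist p q
    rw [Prod.dist_eq, Prod.dist_eq]
    simp only [dist_neg_neg]
    apply max_le
    · nlinarith
    · apply max_le
      · nlinarith
      · nlinarith [mul_le_mul_of_nonneg_left h1 hl]
  -- the time-reversed trajectory
  set F : ℝ → ℂ × ℂ × ℂ := fun t => (φ (-t), ψ1 (-t), ψ2 (-t)) with hFdef
  have hF' : ∀ t, 0 ≤ t → HasDerivAt F (v t (F t)) t := by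
    intro t ht
    have hneg : HasDerivAt (fun s : ℝ => -s) (-1) t := (hasDerivAt_id t).neg
    have hA : HasDerivAt (fun s => φ (-s)) (-ψ1 (-t)) t := by
      have := (hd0 (-t)).scomp t hneg
      simpa [Function.comp_def] using this
    have hB : HasDerivAt (fun s => ψ1 (-s)) (-ψ2 (-t)) t := by
      have := (hd1 (-t)).scomp t hneg
      simpa [Function.comp_def] using this
    have hCd : HasDerivAt (fun s => ψ2 (-s)) (-ψ3 (-t)) t := by
      have := (hd2 (-t)).scomp t hneg
      simpa [Function.comp_def] using this
    have hCd' : HasDerivAt (fun s => ψ2 (-s)) (lam * φ (-t) + ψ1 (-t)) t := by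
      have heqt := heq' (-t) (neg_nonpos.mpr ht)
      have : -ψ3 (-t) = lam * φ (-t) + ψ1 (-t) := by linear_combination -heqt
      rwa [this] at hCd
    exact hA.prodMk (hB.prodMk hCd')
  set b : ℝ := -x₀ with hbdef
  have hb : 0 < b := by simp [hbdef]; linarith
  have hgd : ∀ t ∈ Ico (0:ℝ) b,
      HasDerivWithinAt (fun _ : ℝ => ((0:ℂ), (0:ℂ), (0:ℂ)))
        (v t ((fun _ : ℝ => ((0:ℂ), (0:ℂ), (0:ℂ))) t)) (Ici t) t := by
    intro t _
    have hv0 : v t ((0:ℂ), (0:ℂ), (0:ℂ)) = ((0:ℂ), (0:ℂ), (0:ℂ)) := by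
      simp [hvdef]
    rw [hv0]
    exact (hasDerivAt_const _ _).hasDerivWithinAt
  have huniq : EqOn F (fun _ : ℝ => ((0:ℂ), (0:ℂ), (0:ℂ))) (Icc 0 b) := by
    apply ODE_solution_unique hlip
    · exact ((hc0.comp continuous_neg).prodMk
        ((hc1.comp continuous_neg).prodMk (hc2.comp continuous_neg))).continuousOn
    · exact fun t ht => (hF' t ht.1).hasDerivWithinAt
    · exact continuousOn_const
    · exact hgd
    · show F 0 = _
      rw [hFdef]
      simp only [neg_zero]
      rw [hφ0, hφ'0, hψ20]
  have hFb := huniq ⟨le_of_lt hb, le_refl b⟩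
  have : φ x₀ = 0 := by
    have h1 := congrArg Prod.fst hFb
    simpa [hFdef, hbdef] using h1
  exact hx₀ne this
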